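/- Let 𝔉 = 𝔉(X) be the free profinite group on a finite set X with |X| > 1. Given distinct x, y ∈ X and c = [x, y] = xyx⁻¹y⁻¹, the centralizer C_𝔉(c) coincides with the closure in 𝔉 of the cyclic subgroup ⟨c⟩. -/

import Mathlib

set_option linter.unusedVariables false

namespace CSP

/-! ### The profinite completion of a discrete group -/

/-- The index set for the profinite completion: finite-index normal subgroups. -/
abbrev FinQuot (G : Type*) [Group G] : Type _ :=
  {N : Subgroup G // N.Normal ∧ N.FiniteIndex}

variable (G : Type*) [Group G]

instance (N : FinQuot G) : (N.1).Normal := N.2.1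

instance (N : FinQuot G) : TopologicalSpace (G ⧸ N.1) := ⊥

instance (N : FinQuot G) : DiscreteTopology (G ⧸ N.1) := ⟨rfl⟩

instance (N : FinQuot G) : IsTopologicalGroup (G ⧸ N.1) where
  continuous_mul := continuous_of_discreteTopology
  continuous_inv := continuous_of_discreteTopology

/-- The diagonal homomorphism from `G` into the product of all of its finite quotients. -/
def toFinQuots : G →* (∀ N : FinQuot G, G ⧸ N.1) :=
  Pi.monoidHom fun N => QuotientGroup.mk' N.1

/-- The profinite completion of `G` as a subgroup of the product of the finite
quotients of `G`: the closure of the image of the diagonal map. -/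
def profSubgroup : Subgroup (∀ N : FinQuot G, G ⧸ N.1) :=
  (toFinQuots G).range.topologicalClosure

/-- The profinite completion of a (discrete) group `G`, as a topological group.
For `G = F(X)` a free group on a finite set `X`, this is the free profinite group
`𝔉(X)` on `X`. -/
abbrev ProfComp : Type _ := ↥(profSubgroup G)

/-- The canonical homomorphism from `G` to its profinite completion.  For a free
group this is the embedding of `F(X)` into the free profinite group `𝔉(X)`. -/
def unit : G →* ProfComp G :=
  (toFinQuots G).codRestrict _ fun g =>
    Subgroup.le_topologicalClosure _ (MonoidHom.mem_range.2 ⟨g, rfl⟩)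



section Voltage

variable {G : Type*} [Group G]

def Tperm (m : G) (v : G → ZMod 3) : Equiv.Perm (G × ZMod 3) where
  toFun p := (m * p.1, p.2 + v p.1)
  invFun p := (m⁻¹ * p.1, p.2 - v (m⁻¹ * p.1))
  left_inv p := by simp
  right_inv p := by simp

theorem Tperm_mul (m m' : G) (v v' : G → ZMod 3) :
    Tperm m v * Tperm m' v' = Tperm (m * m') (fun g => v' g + v (m' * g)) := by
  ext p <;> simp [Tperm, Equiv.Perm.mul_apply, mul_assoc, add_assoc]

theorem Tperm_one : (Tperm (1 : G) (fun _ => 0)) = 1 := by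
  ext p <;> simp [Tperm]

theorem Tperm_inv (m : G) (v : G → ZMod 3) :
    (Tperm m v)⁻¹ = Tperm m⁻¹ (fun g => - v (m⁻¹ * g)) := by
  symm
  apply eq_inv_of_mul_eq_one_left
  rw [Tperm_mul]
  simpa using Tperm_one

theorem Tperm_inj {m m' : G} {v v' : G → ZMod 3} (h : Tperm m v = Tperm m' v') :
    m = m' ∧ v = v' := by
  have h1 : ∀ p : G × ZMod 3, Tperm m v p = Tperm m' v' p := fun p => by rw [h]
  constructor
  · simpa [Tperm] using (congrArg Prod.fst (h1 (1, 0)))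
  · funext g
    simpa [Tperm] using (congrArg Prod.snd (h1 (g, 0)))

end Voltage


theorem aux_eq {Γ : Type*} [Group Γ] (u w z : Γ) : u * (z * w) = 1 ↔ z = u⁻¹ * w⁻¹ := by
  rw [mul_eq_one_iff_inv_eq, eq_mul_inv_iff_mul_eq]
  exact eq_comm

theorem normal_inf {Γ : Type*} [Group Γ] {H K : Subgroup Γ} (hH : H.Normal) (hK : K.Normal) :
    (H ⊓ K).Normal :=
  ⟨fun n hn g => Subgroup.mem_inf.mpr
    ⟨hH.conj_mem _ (Subgroup.mem_inf.mp hn).1 g, hK.conj_mem _ (Subgroup.mem_inf.mp hn).2 g⟩⟩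

/-- The finite core lemma: for every finite index normal subgroup `N` of the free group,
there is a finite index normal subgroup `M` such that any `w` commuting with
`c = [x,y]` modulo `M` lies in `⟨c⟩N`. -/
theorem core {X : Type} (x y : X) (hxy : x ≠ y) (N : Subgroup (FreeGroup X))
    (hNnorm : N.Normal) (hNfin : N.FiniteIndex) :
    ∃ M : Subgroup (FreeGroup X), M.Normal ∧ M.FiniteIndex ∧
      ∀ w : FreeGroup X,
        (FreeGroup.of x * FreeGroup.of y * (FreeGroup.of x)⁻¹ * (FreeGroup.of y)⁻¹)⁻¹ *
            w⁻¹ *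
            (FreeGroup.of x * FreeGroup.of y * (FreeGroup.of x)⁻¹ * (FreeGroup.of y)⁻¹) *
            w ∈ M →
        ∃ k : ℤ,
          ((FreeGroup.of x * FreeGroup.of y * (FreeGroup.of x)⁻¹ * (FreeGroup.of y)⁻¹) ^ k)⁻¹ *
            w ∈ N := by
  classical
  set c : FreeGroup X :=
    FreeGroup.of x * FreeGroup.of y * (FreeGroup.of x)⁻¹ * (FreeGroup.of y)⁻¹ with hc
  -- the sign homomorphism detecting `y`
  let φ : FreeGroup X →* ℤˣ := FreeGroup.lift (fun t => if t = y then -1 else 1)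
  have hφy : φ (FreeGroup.of y) = -1 := by simp [φ]
  have hφc : φ c = 1 := by
    have key : ∀ u v : ℤˣ, u * v * u⁻¹ * v⁻¹ = 1 := fun u v => by
      rw [mul_comm u v]; simp [mul_assoc]
    simp only [hc, map_mul, map_inv]
    exact key _ _
  haveI : N.FiniteIndex := hNfin
  set N' : Subgroup (FreeGroup X) := N ⊓ φ.ker with hN'
  haveI hN'norm : N'.Normal := normal_inf hNnorm (MonoidHom.normal_ker φ)
  haveI hN'fin : N'.FiniteIndex := by
    haveI : φ.ker.FiniteIndex := Subgroup.finiteIndex_ker φ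
    infer_instance
  set G := FreeGroup X ⧸ N' with hG
  haveI : Finite G := Subgroup.finite_quotient_of_finiteIndex (H := N')
  haveI : DecidableEq G := Classical.decEq G
  haveI : Fintype G := Fintype.ofFinite G
  set π : FreeGroup X →* G := QuotientGroup.mk' N' with hπ
  set a : G := π (FreeGroup.of x) with ha
  set b : G := π (FreeGroup.of y) with hb
  have hπc : π c = a * b * a⁻¹ * b⁻¹ := by
    simp only [hc, map_mul, map_inv]; rfl
  set cb : G := a * b * a⁻¹ * b⁻¹ with hcb
  -- b is not in ⟨cb⟩
  have hbS : b ∉ Subgroup.zpowers cb := by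
    intro hmem
    obtain ⟨k, hk⟩ := Subgroup.mem_zpowers_iff.mp hmem
    let φ' : G →* ℤˣ := QuotientGroup.lift N' φ (fun n hn => by
      have h2 : n ∈ φ.ker := (Subgroup.mem_inf.mp hn).2
      simpa [MonoidHom.mem_ker] using h2)
    have hlift : ∀ w : FreeGroup X, φ' (π w) = φ w := fun w => rfl
    have h1 : φ' cb = 1 := by rw [← hπc, hlift, hφc]
    have h2 : φ' b = -1 := by rw [hb, hlift, hφy]
    rw [← hk, map_zpow, h1, one_zpow] at h2
    exact absurd h2 (by norm_num)
  -- the voltage representation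
  set α : G → ZMod 3 := fun g => if g = 1 then 1 else 0 with hα
  set ψ : FreeGroup X →* Equiv.Perm (G × ZMod 3) :=
    FreeGroup.lift (fun t => if t = x then Tperm a α else Tperm (π (FreeGroup.of t)) (fun _ => 0))
    with hψ
  have hψx : ψ (FreeGroup.of x) = Tperm a α := by simp [hψ]
  have hψof : ∀ t, ψ (FreeGroup.of t) = if t = x then Tperm a α
      else Tperm (π (FreeGroup.of t)) (fun _ => 0) := by
    intro t; simp [hψ]
  have hψy : ψ (FreeGroup.of y) = Tperm b (fun _ => 0) := by
    rw [hψof, if_neg (Ne.symm hxy)]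
  -- every ψ w has voltage shape over π w
  have shape : ∀ w : FreeGroup X, ∃ v : G → ZMod 3, ψ w = Tperm (π w) v := by
    intro w
    induction w using FreeGroup.induction_on with
    | C1 => exact ⟨fun _ => 0, by rw [map_one, map_one, Tperm_one]⟩
    | of t =>
      by_cases ht : t = x
      · subst ht
        exact ⟨α, by rw [hψx]⟩
      · refine ⟨fun _ => 0, ?_⟩
        rw [hψof, if_neg ht]
    | inv_of t ih =>
      obtain ⟨v, hv⟩ := ih
      refine ⟨fun g => - v ((π (FreeGroup.of t))⁻¹ * g), ?_⟩
      rw [map_inv, map_inv, hv, Tperm_inv]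
    | mul u w ihu ihw =>
      obtain ⟨vu, hu⟩ := ihu
      obtain ⟨vw, hw⟩ := ihw
      refine ⟨fun g => vw g + vu (π w * g), ?_⟩
      rw [map_mul, map_mul, hu, hw, Tperm_mul]
  -- explicit formula for ψ c
  set e : G → ZMod 3 := fun z => α (b * (a⁻¹ * (b⁻¹ * z))) - α (a⁻¹ * (b⁻¹ * z)) with he
  have hψc : ψ c = Tperm cb e := by
    rw [hc]
    simp only [map_mul, map_inv, hψx, hψy]
    rw [Tperm_inv, Tperm_inv, Tperm_mul, Tperm_mul, Tperm_mul]
    rw [hcb]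
    congr 1
    funext z
    show (fun g => (fun _ => (0:ZMod 3)) g + (fun g => - α (a⁻¹ * g) + ((fun g => (fun _ => (0:ZMod 3)) g + α (b * g)) (a⁻¹ * g))) ((b:G)⁻¹ * g)) z = e z
    simp only [he, zero_add]
    ring
  -- the kernel of ψ has finite index
  haveI hψker : ψ.ker.FiniteIndex := Subgroup.finiteIndex_ker ψ
  refine ⟨ψ.ker ⊓ N', normal_inf (MonoidHom.normal_ker ψ) hN'norm, inferInstance, ?_⟩
  intro w hw
  have hker : ψ (c⁻¹ * w⁻¹ * c * w) = 1 := by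
    have h2 := (Subgroup.mem_inf.mp hw).1
    simpa [MonoidHom.mem_ker] using h2
  have hcommute : ψ c * ψ w = ψ w * ψ c := by
    open commutatorElement in
    have h0 : (c⁻¹ * w⁻¹ * c * w) = ⁅c⁻¹, w⁻¹⁆ := by
      rw [commutatorElement_def]; simp
    rw [h0, map_commutatorElement] at hker
    have h1 := commutatorElement_eq_one_iff_commute.mp hker
    simp only [map_inv] at h1
    have h2 : Commute (ψ c) (ψ w) := by
      have := h1.inv_inv
      simpa using this
    exact h2
  obtain ⟨f, hf⟩ := shape w
  set s : G := π w with hs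
  have hcc : Tperm cb e * Tperm s f = Tperm s f * Tperm cb e := by
    rw [← hψc, ← hf]; exact hcommute
  rw [Tperm_mul, Tperm_mul] at hcc
  obtain ⟨hbase, hvolt⟩ := Tperm_inj hcc
  have hcbs : Commute cb s := hbase
  have hR : ∀ g : G, e (s * g) = e g + f (cb * g) - f g := by
    intro g
    have h3 := congrFun hvolt g
    calc e (s * g) = f g + e (s * g) - f g := by ring
      _ = e g + f (cb * g) - f g := by rw [h3]
  set S : Subgroup G := Subgroup.zpowers cb with hS
  haveI : Fintype S := Fintype.ofFinite _
  set Λ : G → ZMod 3 := fun g => ∑ h : S, e ((h : G) * g) with hΛdef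
  have hsmul : ∀ h : S, s * (h : G) = (h : G) * s := by
    rintro ⟨hh, hmem⟩
    obtain ⟨k, rfl⟩ := Subgroup.mem_zpowers_iff.mp hmem
    exact (hcbs.zpow_left k).symm
  have hΛs : ∀ g, Λ (s * g) = Λ g := by
    intro g
    have step1 : ∀ h : S, e ((h : G) * (s * g)) =
        e ((h : G) * g) + f (cb * ((h : G) * g)) - f ((h : G) * g) := by
      intro h
      rw [← mul_assoc, ← hsmul h, mul_assoc, hR]
    calc Λ (s * g) = ∑ h : S, e ((h : G) * (s * g)) := by rw [hΛdef]
      _ = ∑ h : S, (e ((h : G) * g) + f (cb * ((h : G) * g)) - f ((h : G) * g)) :=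
          Finset.sum_congr rfl fun h _ => step1 h
      _ = (∑ h : S, (e ((h : G) * g) + f (cb * ((h : G) * g)))) - ∑ h : S, f ((h : G) * g) :=
          Finset.sum_sub_distrib _ _
      _ = ((∑ h : S, e ((h : G) * g)) + ∑ h : S, f (cb * ((h : G) * g))) - ∑ h : S, f ((h : G) * g) := by
          rw [Finset.sum_add_distrib]
      _ = Λ g := by
          have hre : (∑ h : S, f (cb * ((h : G) * g))) = ∑ h : S, f ((h : G) * g) := by
            have h4 := Equiv.sum_comp (Equiv.mulLeft (⟨cb, Subgroup.mem_zpowers cb⟩ : S))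
              (fun h : S => f ((h : G) * g))
            rw [← h4]
            refine Finset.sum_congr rfl fun h _ => ?_
            refine congrArg f ?_
            simp [mul_assoc]
          rw [hre, hΛdef]
          ring
  -- indicator sums
  have hind : ∀ z : G, (∑ h : S, if (h : G) = z then (1 : ZMod 3) else 0) =
      if z ∈ S then (1 : ZMod 3) else 0 := by
    intro z
    by_cases hz : z ∈ S
    · rw [if_pos hz, Finset.sum_eq_single (⟨z, hz⟩ : S)]
      · rw [if_pos rfl]
      · rintro h _ hne
        rw [if_neg]
        intro hh
        exact hne (Subtype.ext hh)
      · intro h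
        exact absurd (Finset.mem_univ _) h
    · rw [if_neg hz, Finset.sum_eq_zero]
      rintro ⟨hval, hhm⟩ _
      rw [if_neg]
      intro hh
      exact hz (hh ▸ hhm)
  have hΛ : ∀ g : G, Λ g =
      (if (b * a⁻¹ * b⁻¹)⁻¹ * g⁻¹ ∈ S then (1 : ZMod 3) else 0) -
      (if (a⁻¹ * b⁻¹)⁻¹ * g⁻¹ ∈ S then (1 : ZMod 3) else 0) := by
    intro g
    have hterm : ∀ h : S, e ((h : G) * g) =
        (if (h : G) = (b * a⁻¹ * b⁻¹)⁻¹ * g⁻¹ then (1 : ZMod 3) else 0) -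
        (if (h : G) = (a⁻¹ * b⁻¹)⁻¹ * g⁻¹ then (1 : ZMod 3) else 0) := by
      intro h
      have h1 : b * (a⁻¹ * (b⁻¹ * ((h : G) * g))) = (b * a⁻¹ * b⁻¹) * ((h : G) * g) := by
        group
      have h2 : a⁻¹ * (b⁻¹ * ((h : G) * g)) = (a⁻¹ * b⁻¹) * ((h : G) * g) := by
        group
      have c1 : (b * (a⁻¹ * (b⁻¹ * ((h : G) * g))) = 1) ↔
          ((h : G) = (b * a⁻¹ * b⁻¹)⁻¹ * g⁻¹) := by
        rw [h1]; exact aux_eq _ g _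
      have c2 : (a⁻¹ * (b⁻¹ * ((h : G) * g)) = 1) ↔
          ((h : G) = (a⁻¹ * b⁻¹)⁻¹ * g⁻¹) := by
        rw [h2]; exact aux_eq _ g _
      simp only [he, hα, c1, c2]
    calc Λ g = ∑ h : S, e ((h : G) * g) := by rw [hΛdef]
      _ = ∑ h : S, ((if (h : G) = (b * a⁻¹ * b⁻¹)⁻¹ * g⁻¹ then (1 : ZMod 3) else 0) -
            (if (h : G) = (a⁻¹ * b⁻¹)⁻¹ * g⁻¹ then (1 : ZMod 3) else 0)) :=
          Finset.sum_congr rfl fun h _ => hterm h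
      _ = (∑ h : S, if (h : G) = (b * a⁻¹ * b⁻¹)⁻¹ * g⁻¹ then (1 : ZMod 3) else 0) -
            ∑ h : S, if (h : G) = (a⁻¹ * b⁻¹)⁻¹ * g⁻¹ then (1 : ZMod 3) else 0 :=
          Finset.sum_sub_distrib _ _
      _ = _ := by rw [hind, hind]
  -- evaluate Λ at b*a*b⁻¹
  have hval1 : Λ (b * a * b⁻¹) = 1 := by
    rw [hΛ]
    have e1 : (b * a⁻¹ * b⁻¹)⁻¹ * (b * a * b⁻¹)⁻¹ = 1 := by group
    have e2 : (a⁻¹ * b⁻¹)⁻¹ * (b * a * b⁻¹)⁻¹ = b * cb := by rw [hcb]; group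
    have hbc : b * cb ∉ S := by
      intro hbc
      apply hbS
      have hb2 : b = b * cb * cb⁻¹ := by group
      rw [hS] at hbc ⊢
      rw [hb2]
      exact (Subgroup.zpowers cb).mul_mem hbc ((Subgroup.zpowers cb).inv_mem (Subgroup.mem_zpowers cb))
    rw [e1, e2, if_pos (one_mem S), if_neg hbc]
    norm_num
  have hval2 := hΛs (b * a * b⁻¹)
  rw [hval1, hΛ] at hval2
  by_cases q1 : (b * a⁻¹ * b⁻¹)⁻¹ * (s * (b * a * b⁻¹))⁻¹ ∈ S
  · have hq : (b * a⁻¹ * b⁻¹)⁻¹ * (s * (b * a * b⁻¹))⁻¹ = s⁻¹ := by group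
    rw [hq] at q1
    have hsS : s ∈ S := (Subgroup.inv_mem_iff S).mp q1
    obtain ⟨k, hk⟩ := Subgroup.mem_zpowers_iff.mp hsS
    refine ⟨k, ?_⟩
    have hπeq : π (c ^ k) = π w := by
      rw [map_zpow, hπc, hk, hs]
    have hmem : (c ^ k)⁻¹ * w ∈ N' := QuotientGroup.eq.mp hπeq
    exact (inf_le_left : N ⊓ φ.ker ≤ N) hmem
  · exfalso
    rw [if_neg q1] at hval2
    by_cases q2 : (a⁻¹ * b⁻¹)⁻¹ * (s * (b * a * b⁻¹))⁻¹ ∈ S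
    · rw [if_pos q2] at hval2
      exact absurd hval2 (by decide)
    · rw [if_neg q2] at hval2
      exact absurd hval2 (by decide)




/-- Corollary 2.7: in the free profinite group `𝔉(X)` on a finite set `X` with
`|X| > 1`, the centralizer of the commutator `c = [x,y] = xyx⁻¹y⁻¹` of two distinct
free generators `x, y ∈ X` is the closure of the (pro)cyclic subgroup `⟨c⟩`. -/
theorem centralizer_of_commutator (X : Type) [Finite X] (hX : 1 < Nat.card X)
    (x y : X) (hxy : x ≠ y) :
    Subgroup.centralizer
        {unit (FreeGroup X)
          (FreeGroup.of x * FreeGroup.of y * (FreeGroup.of x)⁻¹ * (FreeGroup.of y)⁻¹)}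
      = (Subgroup.zpowers
          (unit (FreeGroup X)
            (FreeGroup.of x * FreeGroup.of y * (FreeGroup.of x)⁻¹ *
              (FreeGroup.of y)⁻¹))).topologicalClosure := by
  classical
  set c : FreeGroup X :=
    FreeGroup.of x * FreeGroup.of y * (FreeGroup.of x)⁻¹ * (FreeGroup.of y)⁻¹ with hc
  set C : ProfComp (FreeGroup X) := unit (FreeGroup X) c with hCdef
  apply le_antisymm
  · -- hard direction: centralizer ≤ closure of zpowers
    intro h hmem
    have hcomm : C * h = h * C := Subgroup.mem_centralizer_iff.mp hmem C rfl
    rw [← SetLike.mem_coe, Subgroup.topologicalClosure_coe, mem_closure_iff]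
    intro o ho hho
    obtain ⟨U, hU, rfl⟩ := isOpen_induced_iff.mp ho
    have hhU : (h : ProfComp (FreeGroup X)).1 ∈ U := hho
    obtain ⟨I, u, hu, hsub⟩ := isOpen_pi_iff.mp hU _ hhU
    set N : Subgroup (FreeGroup X) := ⨅ P ∈ I, (P : FinQuot (FreeGroup X)).1 with hN
    have hmemN : ∀ g : FreeGroup X,
        g ∈ N ↔ ∀ P ∈ I, g ∈ (P : FinQuot (FreeGroup X)).1 := by
      intro g; simp [hN, Subgroup.mem_iInf]
    have hNnorm : N.Normal :=
      ⟨fun n hn g => (hmemN _).mpr fun P hP => P.2.1.conj_mem _ ((hmemN _).mp hn P hP) g⟩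
    have hNfin : N.FiniteIndex := Subgroup.finiteIndex_iInf' _ fun P _ => P.2.2
    obtain ⟨M, hMnorm, hMfin, hMkey⟩ := core x y hxy N hNnorm hNfin
    set Mq : FinQuot (FreeGroup X) := ⟨M, hMnorm, hMfin⟩ with hMq
    -- density of the image of the free group
    have hdense : (h : ProfComp (FreeGroup X)).1 ∈
        closure ((toFinQuots (FreeGroup X)).range : Set _) := by
      have h2 : (h : ProfComp (FreeGroup X)).1 ∈
          ((toFinQuots (FreeGroup X)).range.topologicalClosure : Set _) := h.2
      rwa [Subgroup.topologicalClosure_coe] at h2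
    rw [mem_closure_iff] at hdense
    set J : Finset (FinQuot (FreeGroup X)) := insert Mq I with hJ
    have hopen : IsOpen (Set.pi (J : Set (FinQuot (FreeGroup X)))
        (fun P => {(h : ProfComp (FreeGroup X)).1 P})) :=
      isOpen_set_pi J.finite_toSet fun P _ => isOpen_discrete _
    have hhpi : (h : ProfComp (FreeGroup X)).1 ∈ Set.pi (J : Set (FinQuot (FreeGroup X)))
        (fun P => {(h : ProfComp (FreeGroup X)).1 P}) := fun P _ => rfl
    obtain ⟨z, hzo, hzr⟩ := hdense _ hopen hhpi
    obtain ⟨g, rfl⟩ := MonoidHom.mem_range.mp (SetLike.mem_coe.mp hzr)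
    have hagree : ∀ P ∈ J, toFinQuots (FreeGroup X) g P = (h : ProfComp (FreeGroup X)).1 P :=
      fun P hP => hzo P hP
    -- commutation modulo M
    have h4 : (h : ProfComp (FreeGroup X)).1 Mq * C.1 Mq
        = C.1 Mq * (h : ProfComp (FreeGroup X)).1 Mq :=
      congrArg (fun z : ProfComp (FreeGroup X) => z.1 Mq) hcomm.symm
    have hMg : toFinQuots (FreeGroup X) g Mq = (h : ProfComp (FreeGroup X)).1 Mq :=
      hagree Mq (Finset.mem_insert_self _ _)
    have h5 : QuotientGroup.mk' M (g * c) = QuotientGroup.mk' M (c * g) := by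
      have hm1 : QuotientGroup.mk' M (g * c)
          = QuotientGroup.mk' M g * QuotientGroup.mk' M c := map_mul _ _ _
      have hm2 : QuotientGroup.mk' M (c * g)
          = QuotientGroup.mk' M c * QuotientGroup.mk' M g := map_mul _ _ _
      have e1 : QuotientGroup.mk' M g = (h : ProfComp (FreeGroup X)).1 Mq := hMg
      have e2 : QuotientGroup.mk' M c = C.1 Mq := rfl
      rw [hm1, hm2, e1, e2]
      exact h4
    have h6 : c⁻¹ * g⁻¹ * c * g ∈ M := by
      have h7 : (g * c)⁻¹ * (c * g) ∈ M := QuotientGroup.eq.mp h5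
      have h8 : (g * c)⁻¹ * (c * g) = c⁻¹ * g⁻¹ * c * g := by group
      rwa [h8] at h7
    obtain ⟨k, hk⟩ := hMkey g h6
    -- the approximating element c^k
    refine ⟨C ^ k, ?_, SetLike.mem_coe.mpr (Subgroup.mem_zpowers_iff.mpr ⟨k, rfl⟩)⟩
    show (C ^ k : ProfComp (FreeGroup X)).1 ∈ U
    apply hsub
    intro P hP
    have hCk : (C ^ k : ProfComp (FreeGroup X)).1 P = QuotientGroup.mk' P.1 (c ^ k) := by
      have : (C ^ k : ProfComp (FreeGroup X)).1 = toFinQuots (FreeGroup X) (c ^ k) := by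
        rw [map_zpow]
        rfl
      rw [this]
      rfl
    have heq : QuotientGroup.mk' P.1 (c ^ k) = (h : ProfComp (FreeGroup X)).1 P := by
      have h9 : (c ^ k)⁻¹ * g ∈ P.1 := (hmemN _).mp hk P hP
      have h10 : QuotientGroup.mk' P.1 (c ^ k) = QuotientGroup.mk' P.1 g :=
        QuotientGroup.eq.mpr h9
      rw [h10]
      exact hagree P (Finset.mem_insert_of_mem hP)
    rw [hCk, heq]
    exact (hu P hP).2
  · -- easy direction: closure of zpowers ≤ centralizer
    apply Subgroup.topologicalClosure_minimal
    · rw [Subgroup.zpowers_le]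
      exact Subgroup.mem_centralizer_iff.mpr fun g hg => by rw [hg]
    · have hset : (Subgroup.centralizer {C} : Set (ProfComp (FreeGroup X)))
          = Subtype.val ⁻¹' {p | C.1 * p = p * C.1} := by
        ext z
        simp only [SetLike.mem_coe, Subgroup.mem_centralizer_iff, Set.mem_preimage,
          Set.mem_setOf_eq, Set.mem_singleton_iff, forall_eq]
        constructor
        · intro hz
          exact congrArg Subtype.val hz
        · intro hz
          exact Subtype.ext hz
      rw [hset]
      exact IsClosed.preimage continuous_subtype_val
        (isClosed_eq (continuous_mul_left C.1) (continuous_mul_right C.1))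

end CSP
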